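/- Let G = (A, B, E) be a bipartite graph with |A| + |B| = n and let 1 ≤ k ≤ |A|. Consider the algorithm that picks a uniformly random k-subset A' ⊆ A, stores for each a ∈ A' an arbitrary set of min{k, deg(a)} incident edges, and outputs a maximum matching M among the stored edges. Then E[|M|] ≥ (k/n)·|M*|, where M* is a maximum matching of G; i.e., the algorithm has expected approximation ratio at most n/k. -/

import Mathlib

/-- A set of edges of a bipartite graph (with parts α and β) is a matching if no two
    distinct edges share an endpoint. -/
def IsMatching {α β : Type*} (M : Finset (α × β)) : Prop :=
  ∀ e ∈ M, ∀ e' ∈ M, e ≠ e' → e.1 ≠ e'.1 ∧ e.2 ≠ e'.2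


open Finset in
lemma count_containing {α : Type*} [Fintype α] [DecidableEq α] (k : ℕ) (hk : 1 ≤ k)
    (a : α) :
    (((Finset.univ : Finset α).powersetCard k).filter (fun A' => a ∈ A')).card
      = (Fintype.card α - 1).choose (k - 1) := by
  have h1 : ((Finset.univ.erase a : Finset α).powersetCard (k-1)).card
      = (Fintype.card α - 1).choose (k - 1) := by
    rw [card_powersetCard, card_erase_of_mem (mem_univ a), Finset.card_univ]
  rw [← h1]
  apply Finset.card_nbij' (fun A' => A'.erase a) (fun B => insert a B)
  · intro A' hA'
    simp only [Finset.mem_coe, mem_filter, Finset.mem_powersetCard] at hA' ⊢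
    exact ⟨Finset.erase_subset_erase a hA'.1.1,
      by rw [card_erase_of_mem hA'.2, hA'.1.2]⟩
  · intro B hB
    simp only [Finset.mem_coe, Finset.mem_powersetCard] at hB
    have haB : a ∉ B := fun h => (Finset.mem_erase.1 (hB.1 h)).1 rfl
    simp only [Finset.mem_coe, mem_filter, Finset.mem_powersetCard]
    refine ⟨⟨Finset.subset_univ _, ?_⟩, Finset.mem_insert_self a B⟩
    rw [Finset.card_insert_of_notMem haB, hB.2]
    omega
  · intro A' hA'
    simp only [Finset.mem_coe, mem_filter] at hA'
    exact Finset.insert_erase hA'.2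
  · intro B hB
    simp only [Finset.mem_coe, Finset.mem_powersetCard] at hB
    have haB : a ∉ B := fun h => (Finset.mem_erase.1 (hB.1 h)).1 rfl
    exact Finset.erase_insert haB

open Finset in
lemma core_matching {α β : Type*} [DecidableEq α] [DecidableEq β]
    (E Mstar : Finset (α × β)) (hME : Mstar ⊆ E) (hM : IsMatching Mstar)
    (k : ℕ) (E' : α → Finset (α × β))
    (hE'sub : ∀ a, E' a ⊆ E.filter (fun e => e.1 = a))
    (hE'card : ∀ a, (E' a).card = min k ((E.filter (fun e => e.1 = a)).card))
    (A' : Finset α) (hA' : A'.card = k) :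
    ∃ N ⊆ A'.biUnion E', IsMatching N ∧
      (A' ∩ Mstar.image Prod.fst).card ≤ N.card := by
  classical
  set deg : α → ℕ := fun a => (E.filter (fun e => e.1 = a)).card with hdeg
  set T : Finset α := A' ∩ Mstar.image Prod.fst with hT
  set Ts : Finset α := T.filter (fun a => ¬ k < deg a) with hTs
  set Tb : Finset α := T.filter (fun a => k < deg a) with hTb
  -- basic facts
  have hfst : ∀ e ∈ Mstar, ∀ e' ∈ Mstar, e.1 = e'.1 → e = e' := by
    intro e he e' he' h
    by_contra hne
    exact (hM e he e' he' hne).1 h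
  have hE'all : ∀ a, ¬ k < deg a → E' a = E.filter (fun e => e.1 = a) := by
    intro a ha
    refine Finset.eq_of_subset_of_card_le (hE'sub a) ?_
    rw [hE'card a, min_eq_right (not_lt.1 ha)]
  have hE'fst : ∀ a, ∀ e ∈ E' a, e.1 = a := by
    intro a e he
    exact (Finset.mem_filter.1 (hE'sub a he)).2
  have hTcard : T.card ≤ k := by
    rw [← hA']; exact Finset.card_le_card (Finset.inter_subset_left)
  -- main induction
  have main : ∀ U ⊆ Tb, ∃ N ⊆ (Ts ∪ U).biUnion E', IsMatching N ∧
      N.card = Ts.card + U.card := by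
    intro U hU
    induction U using Finset.induction_on with
    | empty =>
      refine ⟨Mstar.filter (fun e => e.1 ∈ Ts), ?_, ?_, ?_⟩
      · intro e he
        rw [Finset.mem_filter] at he
        rw [Finset.mem_biUnion]
        refine ⟨e.1, by simpa using he.2, ?_⟩
        rw [hE'all e.1 (Finset.mem_filter.1 he.2).2]
        exact Finset.mem_filter.2 ⟨hME he.1, rfl⟩
      · intro e he e' he' hne
        exact hM e (Finset.mem_filter.1 he).1 e' (Finset.mem_filter.1 he').1 hne
      · rw [Finset.card_empty, add_zero]
        have himg : (Mstar.filter (fun e => e.1 ∈ Ts)).image Prod.fst = Ts := by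
          apply Finset.Subset.antisymm
          · intro a ha
            obtain ⟨e, he, rfl⟩ := Finset.mem_image.1 ha
            exact (Finset.mem_filter.1 he).2
          · intro a ha
            have : a ∈ T := Finset.mem_of_mem_filter a ha
            rw [hT, Finset.mem_inter] at this
            obtain ⟨e, he, rfl⟩ := Finset.mem_image.1 this.2
            exact Finset.mem_image.2 ⟨e, Finset.mem_filter.2 ⟨he, ha⟩, rfl⟩
        have hinj : Set.InjOn Prod.fst ((Mstar.filter (fun e => e.1 ∈ Ts)) : Set (α × β)) := by
          intro e he e' he' h
          exact hfst e (Finset.mem_filter.1 he).1 e' (Finset.mem_filter.1 he').1 h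
        have := Finset.card_image_of_injOn hinj
        rw [himg] at this
        exact this.symm
    | @insert a U haU ih =>
      have hUTb : U ⊆ Tb := fun x hx => hU (Finset.mem_insert_of_mem hx)
      obtain ⟨N, hNsub, hNmatch, hNcard⟩ := ih hUTb
      have haTb : a ∈ Tb := hU (Finset.mem_insert_self a U)
      have haTs : a ∉ Ts := by
        rw [hTs, Finset.mem_filter]
        rw [hTb, Finset.mem_filter] at haTb
        tauto
      -- N.card < k
      have hdisj : Disjoint Ts (insert a U) := by
        rw [Finset.disjoint_left]
        intro x hx hx'
        rcases Finset.mem_insert.1 hx' with rfl | hx'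
        · exact haTs hx
        · have := hUTb hx'
          rw [hTb, Finset.mem_filter] at this
          rw [hTs, Finset.mem_filter] at hx
          exact hx.2 this.2
      have hcardlt : N.card < k := by
        have h1 : (Ts ∪ insert a U).card ≤ T.card := by
          apply Finset.card_le_card
          apply Finset.union_subset (Finset.filter_subset _ _)
          intro x hx
          exact Finset.mem_of_mem_filter x (hU hx)
        rw [Finset.card_union_of_disjoint hdisj,
          Finset.card_insert_of_notMem haU] at h1
        omega
      -- pick a fresh edge at a
      have hka : (E' a).card = k := by
        rw [hE'card a]
        rw [hTb, Finset.mem_filter] at haTb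
        exact min_eq_left (le_of_lt haTb.2)
      have hsndinj : Set.InjOn Prod.snd (E' a : Set (α × β)) := by
        intro e he e' he' h
        have h1 := hE'fst a e he
        have h2 := hE'fst a e' he'
        exact Prod.ext (h1.trans h2.symm) h
      have himgcard : ((E' a).image Prod.snd).card = k := by
        rw [Finset.card_image_of_injOn hsndinj, hka]
      have hnotsub : ¬ ((E' a).image Prod.snd ⊆ N.image Prod.snd) := by
        intro h
        have := Finset.card_le_card h
        have h2 : (N.image Prod.snd).card ≤ N.card := Finset.card_image_le
        omega
      obtain ⟨b, hb, hbN⟩ := Finset.not_subset.1 hnotsub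
      obtain ⟨e, heE', heb⟩ := Finset.mem_image.1 hb
      have hea : e.1 = a := hE'fst a e heE'
      -- fst of elements of N are in Ts ∪ U, hence ≠ a
      have hNfst : ∀ e' ∈ N, e'.1 ≠ a := by
        intro e' he'
        obtain ⟨a', ha', he'E⟩ := Finset.mem_biUnion.1 (hNsub he')
        have : e'.1 = a' := hE'fst a' e' he'E
        rw [this]
        rintro rfl
        rcases Finset.mem_union.1 ha' with h | h
        · exact haTs h
        · exact haU h
      have heN : e ∉ N := by
        intro h
        exact hbN (Finset.mem_image.2 ⟨e, h, heb⟩)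
      refine ⟨insert e N, ?_, ?_, ?_⟩
      · intro x hx
        rcases Finset.mem_insert.1 hx with rfl | hx
        · exact Finset.mem_biUnion.2 ⟨a, Finset.mem_union_right _ (Finset.mem_insert_self a U), heE'⟩
        · refine Finset.biUnion_subset_biUnion_of_subset_left _ ?_ (hNsub hx)
          exact Finset.union_subset_union_right (Finset.subset_insert a U)
      · intro x hx y hy hne
        rcases Finset.mem_insert.1 hx with hxe | hx <;>
          rcases Finset.mem_insert.1 hy with hye | hy
        · exact absurd (hxe.trans hye.symm) hne
        · constructor
          · rw [hxe, hea]; exact fun h => hNfst y hy h.symm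
          · rw [hxe, heb]; exact fun h => hbN (Finset.mem_image.2 ⟨y, hy, h.symm⟩)
        · constructor
          · rw [hye, hea]; exact fun h => hNfst x hx h
          · rw [hye, heb]; exact fun h => hbN (Finset.mem_image.2 ⟨x, hx, h⟩)
        · exact hNmatch x hx y hy hne
      · rw [Finset.card_insert_of_notMem heN, Finset.card_insert_of_notMem haU, hNcard]
        omega
  obtain ⟨N, hNsub, hNmatch, hNcard⟩ := main Tb (Finset.Subset.refl _)
  refine ⟨N, ?_, hNmatch, ?_⟩
  · refine hNsub.trans (Finset.biUnion_subset_biUnion_of_subset_left _ ?_)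
    apply Finset.union_subset
    · exact (Finset.filter_subset _ _).trans Finset.inter_subset_left
    · exact (Finset.filter_subset _ _).trans Finset.inter_subset_left
  · rw [hNcard]
    have h2 : Tb.card + Ts.card = T.card := by
      rw [hTb, hTs]
      exact Finset.card_filter_add_card_filter_not (fun a => k < deg a)
    omega

/-- The algorithm that picks a uniformly random k-subset A' of A, stores for each
    a ∈ A' an arbitrary set of min{k, deg(a)} incident edges, and outputs a maximum
    matching M(A') among the stored edges satisfies E[|M|] ≥ (k/n)·|M*|. -/
theorem stmt_8 {α β : Type*} [Fintype α] [Fintype β] [DecidableEq α] [DecidableEq β]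
    (E Mstar : Finset (α × β)) (hME : Mstar ⊆ E) (hM : IsMatching Mstar)
    (hmax : ∀ N ⊆ E, IsMatching N → N.card ≤ Mstar.card)
    (k : ℕ) (hk1 : 1 ≤ k) (hk2 : k ≤ Fintype.card α)
    (E' : α → Finset (α × β))
    (hE'sub : ∀ a, E' a ⊆ E.filter (fun e => e.1 = a))
    (hE'card : ∀ a, (E' a).card = min k ((E.filter (fun e => e.1 = a)).card))
    (M : Finset α → Finset (α × β))
    (hMsub : ∀ A' ∈ (Finset.univ : Finset α).powersetCard k, M A' ⊆ A'.biUnion E')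
    (hMmatch : ∀ A' ∈ (Finset.univ : Finset α).powersetCard k, IsMatching (M A'))
    (hMmax : ∀ A' ∈ (Finset.univ : Finset α).powersetCard k,
      ∀ N ⊆ A'.biUnion E', IsMatching N → N.card ≤ (M A').card) :
    (k : ℝ) / (Fintype.card α + Fintype.card β) * Mstar.card ≤
      (∑ A' ∈ (Finset.univ : Finset α).powersetCard k, ((M A').card : ℝ)) /
        (((Finset.univ : Finset α).powersetCard k).card : ℝ) := by
  classical
  set n1 := Fintype.card α with hn1
  set n2 := Fintype.card β with hn2
  set P := (Finset.univ : Finset α).powersetCard k with hP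
  set S := Mstar.image Prod.fst with hS
  have hScard : S.card = Mstar.card := by
    apply Finset.card_image_of_injOn
    intro e he e' he' h
    by_contra hne
    exact (hM e he e' he' hne).1 h
  -- per-subset bound
  have hbound : ∀ A' ∈ P, (A' ∩ S).card ≤ (M A').card := by
    intro A' hA'
    have hAk : A'.card = k := (Finset.mem_powersetCard.1 hA').2
    obtain ⟨N, hNsub, hNmatch, hNcard⟩ :=
      core_matching E Mstar hME hM k E' hE'sub hE'card A' hAk
    exact hNcard.trans (hMmax A' hA' N hNsub hNmatch)
  -- double counting
  have hsum : ∑ A' ∈ P, (A' ∩ S).card = S.card * (n1 - 1).choose (k - 1) := by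
    have h1 : ∀ A' : Finset α, (A' ∩ S).card = ∑ a ∈ S, if a ∈ A' then 1 else 0 := by
      intro A'
      rw [Finset.inter_comm, ← Finset.filter_mem_eq_inter, Finset.card_filter]
    simp_rw [h1]
    rw [Finset.sum_comm]
    have h2 : ∀ a ∈ S, (∑ A' ∈ P, if a ∈ A' then 1 else 0) = (n1 - 1).choose (k - 1) := by
      intro a _
      rw [← Finset.card_filter]
      exact count_containing k hk1 a
    rw [Finset.sum_congr rfl h2, Finset.sum_const, smul_eq_mul]
  have hsum2 : Mstar.card * (n1 - 1).choose (k - 1) ≤ ∑ A' ∈ P, (M A').card := by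
    rw [← hScard, ← hsum]
    exact Finset.sum_le_sum hbound
  -- arithmetic
  have hPcard : P.card = n1.choose k := by
    rw [hP, Finset.card_powersetCard, Finset.card_univ]
  have hCpos : 0 < n1.choose k := Nat.choose_pos hk2
  have hid : n1 * (n1 - 1).choose (k - 1) = n1.choose k * k := by
    have h := Nat.add_one_mul_choose_eq (n1 - 1) (k - 1)
    have e1 : n1 - 1 + 1 = n1 := by omega
    have e2 : k - 1 + 1 = k := by omega
    rw [e1, e2] at h
    exact h
  have hn1pos : 1 ≤ n1 := hk1.trans hk2
  rw [hPcard]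
  have hd1 : (0:ℝ) < (n1 : ℝ) + (n2 : ℝ) := by
    have : (1:ℝ) ≤ (n1 : ℝ) := by exact_mod_cast hn1pos
    have : (0:ℝ) ≤ (n2 : ℝ) := by positivity
    linarith
  have hd2 : (0:ℝ) < (n1.choose k : ℝ) := by exact_mod_cast hCpos
  rw [div_mul_eq_mul_div, div_le_div_iff₀ hd1 hd2]
  have hs : (Mstar.card : ℝ) * ((n1 - 1).choose (k - 1) : ℝ) ≤
      ∑ A' ∈ P, ((M A').card : ℝ) := by
    have := hsum2
    push_cast
    exact_mod_cast this
  have hidR : (n1 : ℝ) * ((n1 - 1).choose (k - 1) : ℝ) = (n1.choose k : ℝ) * k := by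
    exact_mod_cast hid
  have hm0 : (0:ℝ) ≤ (Mstar.card : ℝ) := by positivity
  have hc0 : (0:ℝ) ≤ ((n1 - 1).choose (k - 1) : ℝ) := by positivity
  have hn20 : (0:ℝ) ≤ (n2 : ℝ) := by positivity
  nlinarith [mul_le_mul_of_nonneg_right hs (le_of_lt hd1),
    mul_nonneg (mul_nonneg hm0 hc0) hn20]
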